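/- Let φ : R → S be a ring homomorphism such that S has finite flat dimension as a right R-module. Then the restriction of scalars of every injective left S-module has finite injective dimension as a left R-module. -/

import Mathlib

open CategoryTheory CategoryTheory.Limits

universe u

/-- `X` has injective dimension at most `n` in an abelian category. -/
def InjDimLE {C : Type*} [Category C] [Abelian C] : ℕ → C → Prop
  | 0, X => Injective X
  | n + 1, X => ∃ (I : C) (f : X ⟶ I), Injective I ∧ Mono f ∧ InjDimLE n (cokernel f)

/-- `S` has flat dimension at most `n`. -/
def FlatDimLE (R : Type u) [CommRing R] : ℕ → ModuleCat.{u} R → Prop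
  | 0, X => Module.Flat R X
  | n + 1, X => ∃ (P : ModuleCat.{u} R) (f : P ⟶ X),
      Module.Flat R P ∧ Epi f ∧ FlatDimLE R n (kernel f)

namespace StmtAux

variable {R : Type u} [CommRing R]

section InjLemmas

variable {M N : Type u} [AddCommGroup M] [AddCommGroup N] [Module R M] [Module R N]

lemma inj_of_equiv (e : M ≃ₗ[R] N) (h : Module.Injective R M) : Module.Injective R N := by
  constructor
  intro X Y _ _ _ _ f hf g
  obtain ⟨h', hh⟩ := h.out f hf ((e.symm : N →ₗ[R] M).comp g)
  refine ⟨(e : M →ₗ[R] N).comp h', fun x => ?_⟩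
  simp only [LinearMap.coe_comp, Function.comp_apply, hh x, LinearEquiv.coe_coe]
  exact e.apply_symm_apply _

lemma inj_of_retract (s : M →ₗ[R] N) (r : N →ₗ[R] M)
    (hrs : ∀ x, r (s x) = x) (h : Module.Injective R N) : Module.Injective R M := by
  constructor
  intro X Y _ _ _ _ f hf g
  obtain ⟨h', hh⟩ := h.out f hf (s.comp g)
  refine ⟨r.comp h', fun x => ?_⟩
  simp only [LinearMap.coe_comp, Function.comp_apply, hh x]
  exact hrs _

lemma inj_of_subsingleton [Subsingleton M] : Module.Injective R M :=
  ⟨fun X Y _ _ _ _ f _ g => ⟨0, fun _ => Subsingleton.elim _ _⟩⟩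

lemma inj_pi {ι : Type u} {Q : ι → Type u} [∀ i, AddCommGroup (Q i)] [∀ i, Module R (Q i)]
    (h : ∀ i, Module.Injective R (Q i)) : Module.Injective R (∀ i, Q i) := by
  constructor
  intro X Y _ _ _ _ f hf g
  choose h' hh using fun i => (h i).out f hf ((LinearMap.proj i).comp g)
  exact ⟨LinearMap.pi h', fun x => funext fun i => hh i x⟩

lemma inj_prod (hM : Module.Injective R M) (hN : Module.Injective R N) :
    Module.Injective R (M × N) := by
  constructor
  intro X Y _ _ _ _ f hf g
  obtain ⟨h₁, hh₁⟩ := hM.out f hf ((LinearMap.fst R M N).comp g)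
  obtain ⟨h₂, hh₂⟩ := hN.out f hf ((LinearMap.snd R M N).comp g)
  exact ⟨h₁.prod h₂, fun x => Prod.ext (hh₁ x) (hh₂ x)⟩

end InjLemmas

variable (R) in
/-- Concrete injective-dimension predicate for `R`-modules. -/
def IDL : ℕ → ModuleCat.{u} R → Prop
  | 0, M => Module.Injective R M
  | n + 1, M => ∃ (J : ModuleCat.{u} R) (f : ↥M →ₗ[R] ↥J),
      Module.Injective R ↥J ∧ Function.Injective f ∧
      IDL n (ModuleCat.of R (↥J ⧸ LinearMap.range f))

lemma idl_congr : ∀ {n : ℕ} {M N : ModuleCat.{u} R}, (↥M ≃ₗ[R] ↥N) → IDL R n M → IDL R n N := by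
  intro n
  induction n with
  | zero => intro M N e h; exact inj_of_equiv e h
  | succ n ih =>
    rintro M N e ⟨J, f, hJ, hf, hq⟩
    refine ⟨J, f.comp (e.symm : ↥N →ₗ[R] ↥M), hJ, hf.comp e.symm.injective, ?_⟩
    have hr : LinearMap.range (f.comp (e.symm : ↥N →ₗ[R] ↥M)) = LinearMap.range f := by
      rw [LinearMap.range_comp, LinearEquiv.range, Submodule.map_top]
    exact ih (Submodule.quotEquivOfEq _ _ hr.symm) hq

lemma idl_of_injective : ∀ (n : ℕ) {M : ModuleCat.{u} R},
    Module.Injective R ↥M → IDL R n M := by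
  intro n
  induction n with
  | zero => intro M h; exact h
  | succ n ih =>
    intro M h
    refine ⟨M, LinearMap.id, h, fun a b hab => hab, ?_⟩
    haveI : Subsingleton (↥(ModuleCat.of R (↥M ⧸ LinearMap.range (LinearMap.id : ↥M →ₗ[R] ↥M)))) := by
      show Subsingleton (↥M ⧸ LinearMap.range (LinearMap.id : ↥M →ₗ[R] ↥M))
      rw [Submodule.Quotient.subsingleton_iff, LinearMap.range_id]
    exact ih inj_of_subsingleton


section Quot

variable {J J' M N : Type u} [AddCommGroup J] [AddCommGroup J'] [AddCommGroup M]
  [AddCommGroup N] [Module R J] [Module R J'] [Module R M] [Module R N]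

/-- Quotient of a product by a product of submodules. -/
noncomputable def quotProdEquiv (p : Submodule R J) (q : Submodule R J') :
    ((J × J') ⧸ (p.prod q)) ≃ₗ[R] (J ⧸ p) × (J' ⧸ q) := by
  refine (Submodule.quotEquivOfEq _ _ ?_).trans
    (LinearMap.quotKerEquivOfSurjective (p.mkQ.prodMap q.mkQ) ?_)
  · ext x
    simp only [Submodule.mem_prod, LinearMap.mem_ker, LinearMap.prodMap_apply, Prod.mk_eq_zero,
      Submodule.mkQ_apply, Submodule.Quotient.mk_eq_zero]
  · rintro ⟨a, b⟩
    obtain ⟨x, hx⟩ := p.mkQ_surjective a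
    obtain ⟨y, hy⟩ := q.mkQ_surjective b
    exact ⟨(x, y), by simp [hx, hy]⟩

lemma range_prodMap (f : M →ₗ[R] J) (g : N →ₗ[R] J') :
    LinearMap.range (f.prodMap g) = (LinearMap.range f).prod (LinearMap.range g) := by
  ext ⟨a, b⟩
  constructor
  · rintro ⟨⟨m, n⟩, h⟩
    rw [LinearMap.prodMap_apply] at h
    cases h
    exact ⟨⟨m, rfl⟩, ⟨n, rfl⟩⟩
  · rintro ⟨⟨m, hm⟩, ⟨n, hn⟩⟩
    exact ⟨(m, n), by simp [hm, hn]⟩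

/-- Quotient of a power by the range of a power map. -/
noncomputable def quotPiEquiv (ι : Type u) (f : M →ₗ[R] J) :
    ((ι → J) ⧸ LinearMap.range (f.compLeft ι)) ≃ₗ[R] (ι → J ⧸ LinearMap.range f) := by
  refine (Submodule.quotEquivOfEq _ _ ?_).trans
    (LinearMap.quotKerEquivOfSurjective ((LinearMap.range f).mkQ.compLeft ι) ?_)
  · ext F
    simp only [LinearMap.mem_range, LinearMap.mem_ker]
    constructor
    · rintro ⟨G, rfl⟩
      funext i
      show (LinearMap.range f).mkQ (f (G i)) = 0
      simp
    · intro h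
      choose G hG using fun i => (Submodule.Quotient.mk_eq_zero _).mp (congrFun h i)
      exact ⟨G, funext fun i => hG i⟩
  · intro F
    choose G hG using fun i => (LinearMap.range f).mkQ_surjective (F i)
    exact ⟨G, funext fun i => hG i⟩

/-- A split injection gives a product decomposition. -/
noncomputable def splitEquiv (s : M →ₗ[R] N) (r : N →ₗ[R] M) (h : ∀ x, r (s x) = x) :
    N ≃ₗ[R] M × (N ⧸ LinearMap.range s) := by
  have hw : LinearMap.range s ≤ LinearMap.ker (LinearMap.id - s.comp r) := by
    rintro _ ⟨m, rfl⟩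
    simp [h]
  refine
    { toFun := fun x => (r x, Submodule.Quotient.mk x)
      map_add' := by intros; simp [Prod.ext_iff]
      map_smul' := by intros; simp [Prod.ext_iff]
      invFun := fun p => s p.1 + (LinearMap.range s).liftQ (LinearMap.id - s.comp r) hw p.2
      left_inv := fun x => by simp
      right_inv := ?_ }
  rintro ⟨m, x⟩
  obtain ⟨x, rfl⟩ := Submodule.Quotient.mk_surjective _ x
  have h1 : r (s m + (x - s (r x))) = m := by simp [h]
  have h2 : (Submodule.Quotient.mk (s m + (x - s (r x))) :
      N ⧸ LinearMap.range s) = Submodule.Quotient.mk x := by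
    rw [Submodule.Quotient.eq]
    refine LinearMap.mem_range.mpr ⟨m - r x, ?_⟩
    rw [map_sub]
    abel
  simp only [Submodule.liftQ_apply, LinearMap.sub_apply, LinearMap.id_apply,
    LinearMap.coe_comp, Function.comp_apply]
  exact Prod.ext h1 h2

end Quot

lemma idl_prod : ∀ {n : ℕ} {M N : ModuleCat.{u} R}, IDL R n M → IDL R n N →
    IDL R n (ModuleCat.of R (↥M × ↥N)) := by
  intro n
  induction n with
  | zero => intro M N hM hN; exact inj_prod hM hN
  | succ n ih =>
    rintro M N ⟨J, f, hJ, hf, hq⟩ ⟨J', f', hJ', hf', hq'⟩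
    refine ⟨ModuleCat.of R (↥J × ↥J'), f.prodMap f', inj_prod hJ hJ',
      hf.prodMap hf', ?_⟩
    have e : ((↥J × ↥J') ⧸ LinearMap.range (f.prodMap f')) ≃ₗ[R]
        ((↥J ⧸ LinearMap.range f) × (↥J' ⧸ LinearMap.range f')) :=
      (Submodule.quotEquivOfEq _ _ (range_prodMap f f')).trans
        (quotProdEquiv (LinearMap.range f) (LinearMap.range f'))
    exact idl_congr e.symm (ih hq hq')

lemma idl_pi (ι : Type u) : ∀ {n : ℕ} {M : ModuleCat.{u} R}, IDL R n M →
    IDL R n (ModuleCat.of R (ι → ↥M)) := by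
  intro n
  induction n with
  | zero => intro M hM; exact inj_pi fun _ => hM
  | succ n ih =>
    rintro M ⟨J, f, hJ, hf, hq⟩
    refine ⟨ModuleCat.of R (ι → ↥J), f.compLeft ι, inj_pi fun _ => hJ,
      fun F G hFG => funext fun i => hf (congrFun hFG i), ?_⟩
    exact idl_congr (quotPiEquiv ι f).symm (ih hq)


section Schanuel

variable {M J J' : Type u} [AddCommGroup M] [AddCommGroup J] [AddCommGroup J']
  [Module R M] [Module R J] [Module R J']

lemma pushout_equiv (f : M →ₗ[R] J) (f' : M →ₗ[R] J')
    (hf' : Function.Injective f') (hJ : Module.Injective R J) :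
    Nonempty (((J × J') ⧸ LinearMap.range (f.prod (-f'))) ≃ₗ[R]
      (J × (J' ⧸ LinearMap.range f'))) := by
  set T : Submodule R (J × J') := LinearMap.range (f.prod (-f')) with hT
  set inl : J →ₗ[R] ((J × J') ⧸ T) := T.mkQ.comp (LinearMap.inl R J J') with hinl
  have hinl_apply : ∀ a : J, inl a = T.mkQ (a, 0) := fun a => rfl
  have hinl_inj : Function.Injective inl := by
    rw [injective_iff_map_eq_zero]
    intro a ha
    rw [hinl_apply, Submodule.mkQ_apply, Submodule.Quotient.mk_eq_zero] at ha
    obtain ⟨m, hm⟩ := ha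
    have hm1 : f m = a := congrArg Prod.fst hm
    have hm2 : -(f' m) = 0 := congrArg Prod.snd hm
    have hm0 : m = 0 := hf' (by rw [neg_eq_zero] at hm2; rw [hm2, map_zero])
    rw [← hm1, hm0, map_zero]
  obtain ⟨rr, hrr⟩ := hJ.out inl hinl_inj LinearMap.id
  have e1 := splitEquiv inl rr fun x => hrr x
  set ψ : J' →ₗ[R] (((J × J') ⧸ T) ⧸ LinearMap.range inl) :=
    (LinearMap.range inl).mkQ.comp (T.mkQ.comp (LinearMap.inr R J J')) with hψ
  have hψ_apply : ∀ c : J', ψ c = (LinearMap.range inl).mkQ (T.mkQ (0, c)) := fun c => rfl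
  have hψsurj : Function.Surjective ψ := by
    intro z
    obtain ⟨q, rfl⟩ := (LinearMap.range inl).mkQ_surjective z
    obtain ⟨⟨j, j'⟩, rfl⟩ := T.mkQ_surjective q
    refine ⟨j', ?_⟩
    rw [hψ_apply, Submodule.mkQ_apply, Submodule.mkQ_apply, Submodule.mkQ_apply,
      Submodule.mkQ_apply, Submodule.Quotient.eq]
    refine ⟨-j, ?_⟩
    show T.mkQ (-j, 0) = T.mkQ ((0, j')) - T.mkQ ((j, j'))
    rw [← map_sub]
    congr 1
    rw [Prod.mk_sub_mk]
    simp
  have hψker : LinearMap.ker ψ = LinearMap.range f' := by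
    ext c
    rw [LinearMap.mem_ker, hψ_apply, Submodule.mkQ_apply, Submodule.Quotient.mk_eq_zero]
    constructor
    · rintro ⟨j, hj⟩
      rw [hinl_apply, Submodule.mkQ_apply, Submodule.mkQ_apply, Submodule.Quotient.eq] at hj
      obtain ⟨m, hm⟩ := hj
      have hm2 : -(f' m) = (0 : J') - c := congrArg Prod.snd hm
      refine ⟨m, ?_⟩
      rw [zero_sub] at hm2
      exact neg_injective hm2
    · rintro ⟨m, rfl⟩
      have key : T.mkQ (0, f' m) = inl (f m) := by
        rw [hinl_apply, Submodule.mkQ_apply, Submodule.mkQ_apply, Submodule.Quotient.eq]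
        refine ⟨-m, ?_⟩
        show ((f (-m), -(f' (-m))) : J × J') = (0, f' m) - (f m, 0)
        rw [Prod.mk_sub_mk, map_neg, map_neg, neg_neg]
        simp
      rw [key]
      exact ⟨f m, rfl⟩
  refine ⟨e1.trans (LinearEquiv.prodCongr (LinearEquiv.refl R J) ?_)⟩
  exact ((Submodule.quotEquivOfEq _ _ hψker.symm).trans
    (LinearMap.quotKerEquivOfSurjective ψ hψsurj)).symm

lemma pushout_swap (f : M →ₗ[R] J) (f' : M →ₗ[R] J') :
    Nonempty (((J × J') ⧸ LinearMap.range (f.prod (-f'))) ≃ₗ[R]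
      ((J' × J) ⧸ LinearMap.range (f'.prod (-f)))) := by
  refine ⟨Submodule.Quotient.equiv _ _ (LinearEquiv.prodComm R J J') ?_⟩
  ext x
  constructor
  · rintro ⟨⟨a, b⟩, ⟨m, hm⟩, rfl⟩
    have hm1 : f m = a := congrArg Prod.fst hm
    have hm2 : -(f' m) = b := congrArg Prod.snd hm
    refine ⟨-m, ?_⟩
    show ((f' (-m), -(f (-m))) : J' × J) = LinearEquiv.prodComm R J J' (a, b)
    rw [map_neg, map_neg, neg_neg, ← hm1, ← hm2]
    rfl
  · rintro ⟨m, hm⟩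
    refine ⟨(f (-m), -(f' (-m))), ⟨-m, rfl⟩, ?_⟩
    show ((-(f' (-m)), f (-m)) : J' × J) = x
    rw [map_neg, map_neg, neg_neg, ← hm]
    rfl

lemma schanuel (f : M →ₗ[R] J) (f' : M →ₗ[R] J')
    (hf : Function.Injective f) (hf' : Function.Injective f')
    (hJ : Module.Injective R J) (hJ' : Module.Injective R J') :
    Nonempty ((J × (J' ⧸ LinearMap.range f')) ≃ₗ[R] (J' × (J ⧸ LinearMap.range f))) := by
  obtain ⟨e1⟩ := pushout_equiv f f' hf' hJ
  obtain ⟨e2⟩ := pushout_equiv f' f hf hJ'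
  obtain ⟨sw⟩ := pushout_swap f f'
  exact ⟨e1.symm.trans (sw.trans e2)⟩

end Schanuel

lemma modinj_of_catinj {X : ModuleCat.{u} R} (h : Injective X) : Module.Injective R ↥X := by
  haveI : Injective (ModuleCat.of R ↥X) := h
  exact Module.injective_module_of_injective_object R ↥X

lemma catinj_of_modinj {X : ModuleCat.{u} R} (h : Module.Injective R ↥X) : Injective X := by
  haveI := h
  exact Module.injective_object_of_injective_module R ↥X

lemma exists_embedding (M : ModuleCat.{u} R) : ∃ (J : ModuleCat.{u} R) (f : ↥M →ₗ[R] ↥J),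
    Module.Injective R ↥J ∧ Function.Injective f :=
  ⟨Injective.under M, (Injective.ι M).hom, modinj_of_catinj inferInstance,
    (ModuleCat.mono_iff_injective (Injective.ι M)).mp inferInstance⟩

lemma AB : ∀ n : ℕ,
    (∀ (M N : ModuleCat.{u} R) (s : ↥M →ₗ[R] ↥N) (r : ↥N →ₗ[R] ↥M),
        (∀ x, r (s x) = x) → IDL R n N → IDL R n M) ∧
    (∀ M : ModuleCat.{u} R, IDL R (n + 1) M →
      ∀ (J : ModuleCat.{u} R) (f : ↥M →ₗ[R] ↥J), Module.Injective R ↥J →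
        Function.Injective f → IDL R n (ModuleCat.of R (↥J ⧸ LinearMap.range f))) := by
  intro n
  induction n with
  | zero =>
    constructor
    · intro M N s r hrs hN
      exact inj_of_retract s r hrs hN
    · intro M hM J f hJ hf
      obtain ⟨J₀, f₀, hJ₀, hf₀, hq₀⟩ := hM
      obtain ⟨e⟩ := schanuel f f₀ hf hf₀ hJ hJ₀
      exact inj_of_retract (LinearMap.inr R _ _) (LinearMap.snd R _ _) (fun x => rfl)
        (inj_of_equiv e (inj_prod hJ hq₀))
  | succ n ih =>
    obtain ⟨ihA, ihB⟩ := ih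
    have hA : ∀ (M N : ModuleCat.{u} R) (s : ↥M →ₗ[R] ↥N) (r : ↥N →ₗ[R] ↥M),
        (∀ x, r (s x) = x) → IDL R (n + 1) N → IDL R (n + 1) M := by
      intro M N s r hrs hN
      obtain ⟨EM, eM, hEM, heM⟩ := exists_embedding M
      obtain ⟨EK, eK, hEK, heK⟩ :=
        exists_embedding (ModuleCat.of R (↥N ⧸ LinearMap.range s))
      have esplit := splitEquiv s r hrs
      set g : ↥N →ₗ[R] (↥EM × ↥EK) :=
        (eM.prodMap eK).comp (esplit : ↥N →ₗ[R] ↥M × (↥N ⧸ LinearMap.range s)) with hgdef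
      have hg : Function.Injective g := by
        rw [hgdef, LinearMap.coe_comp, LinearMap.coe_prodMap]
        exact (heM.prodMap heK).comp esplit.injective
      have hq : IDL R n (ModuleCat.of R ((↥EM × ↥EK) ⧸ LinearMap.range g)) :=
        ihB N hN (ModuleCat.of R (↥EM × ↥EK)) g (inj_prod hEM hEK) hg
      have hrange : LinearMap.range g = LinearMap.range (eM.prodMap eK) := by
        rw [hgdef, LinearMap.range_comp, LinearEquiv.range, Submodule.map_top]
      have e2 : ((↥EM × ↥EK) ⧸ LinearMap.range g) ≃ₗ[R]
          ((↥EM ⧸ LinearMap.range eM) × (↥EK ⧸ LinearMap.range eK)) :=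
        (Submodule.quotEquivOfEq _ _ (by rw [hrange, range_prodMap])).trans
          (quotProdEquiv _ _)
      have h3 : IDL R n (ModuleCat.of R
          ((↥EM ⧸ LinearMap.range eM) × (↥EK ⧸ LinearMap.range eK))) := idl_congr e2 hq
      have h4 : IDL R n (ModuleCat.of R (↥EM ⧸ LinearMap.range eM)) :=
        ihA (ModuleCat.of R (↥EM ⧸ LinearMap.range eM))
          (ModuleCat.of R ((↥EM ⧸ LinearMap.range eM) × (↥EK ⧸ LinearMap.range eK)))
          (LinearMap.inl R _ _) (LinearMap.fst R _ _) (fun x => rfl) h3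
      exact ⟨EM, eM, hEM, heM, h4⟩
    refine ⟨hA, ?_⟩
    intro M hM J f hJ hf
    obtain ⟨J₀, f₀, hJ₀, hf₀, hq₀⟩ := hM
    obtain ⟨e⟩ := schanuel f f₀ hf hf₀ hJ hJ₀
    have h1 : IDL R (n + 1) (ModuleCat.of R
        (↥J × ↥(ModuleCat.of R (↥J₀ ⧸ LinearMap.range f₀)))) :=
      idl_prod (idl_of_injective (n + 1) (M := J) hJ) hq₀
    have h2 : IDL R (n + 1) (ModuleCat.of R (↥J₀ × (↥J ⧸ LinearMap.range f))) :=
      idl_congr e h1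
    exact hA (ModuleCat.of R (↥J ⧸ LinearMap.range f))
      (ModuleCat.of R (↥J₀ × (↥J ⧸ LinearMap.range f)))
      (LinearMap.inr R _ _) (LinearMap.snd R _ _) (fun x => rfl) h2


lemma injDimLE_of_iso : ∀ {n : ℕ} {X Y : ModuleCat.{u} R}, (X ≅ Y) →
    InjDimLE n X → InjDimLE n Y := by
  intro n
  induction n with
  | zero => intro X Y e h; exact Injective.of_iso e h
  | succ n ih =>
    rintro X Y e ⟨I, f, hI, hm, hc⟩
    haveI := hm
    refine ⟨I, e.inv ≫ f, hI, mono_comp _ _, ?_⟩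
    exact ih (cokernelEpiComp e.inv f).symm hc

lemma injDimLE_of_idl : ∀ {n : ℕ} {M : ModuleCat.{u} R}, IDL R n M → InjDimLE n M := by
  intro n
  induction n with
  | zero => intro M h; exact catinj_of_modinj h
  | succ n ih =>
    rintro M ⟨J, f, hJ, hf, hq⟩
    refine ⟨J, ModuleCat.ofHom f, catinj_of_modinj hJ, (ModuleCat.mono_iff_injective _).mpr hf, ?_⟩
    exact injDimLE_of_iso (ModuleCat.cokernelIsoRangeQuotient (ModuleCat.ofHom f : M ⟶ J)).symm (ih hq)

lemma flatDimLE_of_iso : ∀ {n : ℕ} {X Y : ModuleCat.{u} R}, (X ≅ Y) →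
    FlatDimLE R n X → FlatDimLE R n Y := by
  intro n
  induction n with
  | zero =>
    intro X Y e h
    haveI : Module.Flat R ↥X := h
    exact Module.Flat.of_linearEquiv e.symm.toLinearEquiv
  | succ n ih =>
    rintro X Y e ⟨P, f, hP, he, hk⟩
    haveI := he
    refine ⟨P, f ≫ e.hom, hP, epi_comp _ _, ?_⟩
    exact ih (kernelCompMono f e.hom).symm hk

lemma idl_char_of_flat : ∀ {n : ℕ} {X : ModuleCat.{u} R}, FlatDimLE R n X →
    IDL R n (ModuleCat.of R (CharacterModule ↥X)) := by
  intro n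
  induction n with
  | zero =>
    intro X h
    exact Module.Flat.iff_characterModule_injective.mp h
  | succ n ih =>
    rintro X ⟨P, f, hP, he, hk⟩
    set f' : ↥P →ₗ[R] ↥X := f.hom with hf'
    have hsurj : Function.Surjective f' := (ModuleCat.epi_iff_surjective f).mp he
    have hdual_inj : Function.Injective (CharacterModule.dual f') := by
      intro c c' hcc
      ext x
      obtain ⟨p, rfl⟩ := hsurj x
      exact congrArg (fun (t : CharacterModule ↥P) => t p) hcc
    refine ⟨ModuleCat.of R (CharacterModule ↥P), CharacterModule.dual f',
      Module.Flat.iff_characterModule_injective.mp hP, hdual_inj, ?_⟩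
    -- the quotient is the character module of the kernel
    have hk' : FlatDimLE R n (ModuleCat.of R ↥(LinearMap.ker f.hom)) :=
      flatDimLE_of_iso (ModuleCat.kernelIsoKer f) hk
    have hres := ih hk'
    -- restriction map to characters of the kernel
    set ρ : CharacterModule ↥P →ₗ[R] CharacterModule ↥(LinearMap.ker f') :=
      CharacterModule.dual (LinearMap.ker f').subtype with hρ
    have hρsurj : Function.Surjective ρ :=
      CharacterModule.dual_surjective_of_injective _ (Submodule.injective_subtype _)
    have hρker : LinearMap.ker ρ = LinearMap.range (CharacterModule.dual f') := by
      ext c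
      constructor
      · intro hc
        -- c vanishes on ker f'; descend to X
        have hc0 : ∀ p : ↥P, p ∈ LinearMap.ker f' → c p = 0 := by
          intro p hp
          exact congrArg (fun (t : CharacterModule ↥(LinearMap.ker f')) => t ⟨p, hp⟩) hc
        have hconst : ∀ p q : ↥P, f' p = f' q → c p = c q := by
          intro p q hpq
          have : c (p - q) = 0 := hc0 _ (by simp [LinearMap.mem_ker, map_sub, hpq])
          have := sub_eq_zero.mp (by rwa [map_sub] at this)
          exact this
        refine ⟨{ toFun := fun x => c (Function.surjInv hsurj x)
                  map_zero' := ?_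
                  map_add' := ?_ }, ?_⟩
        · show c (Function.surjInv hsurj 0) = 0
          have : f' (Function.surjInv hsurj 0) = f' 0 := by
            rw [Function.surjInv_eq hsurj, map_zero]
          rw [hconst _ _ this, map_zero]
        · intro x y
          show c (Function.surjInv hsurj (x + y)) =
            c (Function.surjInv hsurj x) + c (Function.surjInv hsurj y)
          have : f' (Function.surjInv hsurj (x + y)) =
              f' (Function.surjInv hsurj x + Function.surjInv hsurj y) := by
            rw [map_add, Function.surjInv_eq hsurj, Function.surjInv_eq hsurj,
              Function.surjInv_eq hsurj]
          rw [hconst _ _ this, map_add]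
        · ext p
          have : f' (Function.surjInv hsurj (f' p)) = f' p := Function.surjInv_eq hsurj _
          exact hconst _ _ this
      · rintro ⟨d, rfl⟩
        ext ⟨p, hp⟩
        show d (f' p) = 0
        rw [LinearMap.mem_ker] at hp
        rw [hp, map_zero]
    have equiv : (CharacterModule ↥P ⧸ LinearMap.range (CharacterModule.dual f')) ≃ₗ[R]
        CharacterModule ↥(LinearMap.ker f') :=
      (Submodule.quotEquivOfEq _ _ hρker.symm).trans
        (LinearMap.quotKerEquivOfSurjective ρ hρsurj)
    exact idl_congr equiv.symm hres


section Main

variable {S : Type u} [CommRing S] [Algebra R S]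
variable {I : Type u} [AddCommGroup I] [Module S I]

/-- Evaluation character: `x : I`, `c : I⋆` give the character `s ↦ c (s • x)` of `S`. -/
def evChar (x : I) (c : CharacterModule I) : CharacterModule S where
  toFun s := c (s • x)
  map_zero' := by
    show c ((0 : S) • x) = 0
    rw [zero_smul, map_zero]
  map_add' s t := by
    show c ((s + t) • x) = c (s • x) + c (t • x)
    rw [add_smul, map_add]

/-- The `S`-linear evaluation map `I → (I⋆ → S⋆)`. -/
def evCharS : I →ₗ[S] (CharacterModule I → CharacterModule S) where
  toFun x := evChar x
  map_add' x y := by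
    funext c
    ext s
    show c (s • (x + y)) = c (s • x) + c (s • y)
    rw [smul_add, map_add]
  map_smul' t x := by
    funext c
    ext s
    show c (s • t • x) = c ((t • s) • x)
    rw [smul_smul, smul_eq_mul, mul_comm]

lemma evCharS_injective : Function.Injective (evCharS (I := I) (S := S)) := by
  rw [injective_iff_map_eq_zero]
  intro x hx
  by_contra hne
  obtain ⟨c, hc⟩ := CharacterModule.exists_character_apply_ne_zero_of_ne_zero hne
  apply hc
  have h0 : evChar x c = 0 := congrFun hx c
  have h1 : c ((1 : S) • x) = 0 := DFunLike.congr_fun h0 (1 : S)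
  rwa [one_smul] at h1

variable (R S I) in
/-- The `R`-linear version of the evaluation map, on restricted scalars. -/
def evCharR : RestrictScalars R S I →ₗ[R] (CharacterModule I → CharacterModule S) where
  toFun x := evCharS (RestrictScalars.addEquiv R S I x)
  map_add' x y := by
    show evCharS (RestrictScalars.addEquiv R S I (x + y)) = _
    rw [map_add, map_add]
  map_smul' a x := by
    show evCharS (RestrictScalars.addEquiv R S I (a • x)) =
      a • evCharS (RestrictScalars.addEquiv R S I x)
    have h1 : (RestrictScalars.addEquiv R S I) (a • x) =
        algebraMap R S a • (RestrictScalars.addEquiv R S I) x := by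
      rw [RestrictScalars.smul_def (R := R) (S := S) (M := I) a x,
        AddEquiv.apply_symm_apply]
    rw [h1, map_smul]
    show algebraMap R S a • evCharS (RestrictScalars.addEquiv R S I x) =
      a • evCharS (RestrictScalars.addEquiv R S I x)
    funext c
    ext s
    show (evCharS (RestrictScalars.addEquiv R S I x) c) (algebraMap R S a • s) =
      (evCharS (RestrictScalars.addEquiv R S I x) c) (a • s)
    rw [Algebra.smul_def a s, smul_eq_mul]

variable (R) in
/-- An `S`-linear retraction, made `R`-linear. -/
def retrR (r : (CharacterModule I → CharacterModule S) →ₗ[S] I) :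
    (CharacterModule I → CharacterModule S) →ₗ[R] RestrictScalars R S I where
  toFun F := (RestrictScalars.addEquiv R S I).symm (r F)
  map_add' F G := by
    show (RestrictScalars.addEquiv R S I).symm (r (F + G)) = _
    rw [map_add, map_add]
  map_smul' a F := by
    show (RestrictScalars.addEquiv R S I).symm (r (a • F)) =
      a • (RestrictScalars.addEquiv R S I).symm (r F)
    have key : (a • F : CharacterModule I → CharacterModule S) = algebraMap R S a • F := by
      funext c
      ext s
      show (F c) (a • s) = (F c) (algebraMap R S a • s)
      rw [Algebra.smul_def a s, smul_eq_mul]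
    rw [key, map_smul,
      RestrictScalars.smul_def (R := R) (S := S) (M := I) a
        ((RestrictScalars.addEquiv R S I).symm (r F)),
      AddEquiv.apply_symm_apply]

lemma main {n : ℕ} (hS : FlatDimLE R n (ModuleCat.of R S)) (hI : Module.Injective S I) :
    IDL R n (@ModuleCat.of R _ (RestrictScalars R S I) _ (RestrictScalars.module R S I)) := by
  have h1 : IDL R n (ModuleCat.of R (CharacterModule S)) := idl_char_of_flat hS
  have h2 : IDL R n (ModuleCat.of R (CharacterModule I → CharacterModule S)) :=
    idl_pi (CharacterModule I) h1
  obtain ⟨r, hr⟩ := hI.out evCharS evCharS_injective (LinearMap.id : I →ₗ[S] I)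
  refine (AB n).1 (@ModuleCat.of R _ (RestrictScalars R S I) _ (RestrictScalars.module R S I))
    (ModuleCat.of R (CharacterModule I → CharacterModule S))
    (evCharR R S I) (retrR R r) ?_ h2
  intro x
  show (RestrictScalars.addEquiv R S I).symm
    (r (evCharS (RestrictScalars.addEquiv R S I x))) = x
  rw [hr]
  exact (RestrictScalars.addEquiv R S I).symm_apply_apply x

end Main

end StmtAux


/-- Let `R → S` be a ring homomorphism (here: an `R`-algebra
structure on `S`) such that `S` has finite flat dimension as an `R`-module.
Then the restriction of scalars of every injective `S`-module has finite
injective dimension as an `R`-module. -/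
theorem restrictScalars_injective_finite_injDim
    (R S : Type u) [CommRing R] [CommRing S] [Algebra R S]
    (hS : ∃ n, FlatDimLE R n (ModuleCat.of R S))
    (I : Type u) [AddCommGroup I] [Module S I] (hI : Module.Injective S I) :
    ∃ n, InjDimLE n (@ModuleCat.of R _ (RestrictScalars R S I) _ (RestrictScalars.module R S I)) := by
  obtain ⟨n, hS⟩ := hS
  exact ⟨n, StmtAux.injDimLE_of_idl (StmtAux.main hS hI)⟩
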